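/- arXiv:1710.08289 — 3 statements merged into one kernel-verified Lean document; each statement's English description precedes it below -/
import Mathlib

section
/- Let M ∈ ℝ^{ℕ×ℕ} be a bounded operator on ℓ² with a block structure given by 1 = n_1 < n_2 < ⋯, and suppose all finite leading block sections M[k] (the restriction of M to the first k blocks, i.e., indices {1,…,n_{k+1}−1}) are invertible with sup_k ‖(M[k])⁻¹‖ ≤ C_infsup < ∞. If M = LU is a block-LU factorization with L block-lower triangular, L(i,i) = I, and U block-upper triangular, then every diagonal block of U satisfies ‖U(k,k)‖ ≤ (1 + ‖M‖)² C_infsup. -/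
/-- `i` and `j` lie in the same block of the block structure given by the strictly increasing
sequence of block boundaries `N` (block `k` consists of the indices in `[N k, N (k+1))`). -/
def sameBlk (N : ℕ → ℕ) (i j : ℕ) : Prop := ∀ ℓ : ℕ, i < N ℓ ↔ j < N ℓ

/-- `L` is block-lower triangular with identity diagonal blocks. -/
def BlockLowerUnit (N : ℕ → ℕ) (L : ℕ → ℕ → ℝ) : Prop :=
  (∀ i j : ℕ, (∃ ℓ, i < N ℓ ∧ N ℓ ≤ j) → L i j = 0) ∧
    (∀ i j : ℕ, sameBlk N i j → L i j = if i = j then 1 else 0)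

/-- `U` is block-upper triangular. -/
def BlockUpper (N : ℕ → ℕ) (U : ℕ → ℕ → ℝ) : Prop :=
  ∀ i j : ℕ, (∃ ℓ, j < N ℓ ∧ N ℓ ≤ i) → U i j = 0

/-- The leading principal section of an infinite matrix on the first `n` indices. -/
def matSec (M : ℕ → ℕ → ℝ) (n : ℕ) : Matrix (Fin n) (Fin n) ℝ :=
  fun a b => M (a : ℕ) (b : ℕ)


set_option synthInstance.maxHeartbeats 1000000
set_option maxHeartbeats 4000000

open Matrix

section Aux

lemma sum_emb_eq {d m : ℕ} (e : Fin d → Fin m) (he : Function.Injective e) (f : Fin m → ℝ)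
    (h0 : ∀ j, (∀ a, e a ≠ j) → f j = 0) : ∑ j, f j = ∑ a, f (e a) := by
  have h1 : ∑ a, f (e a) = ∑ j ∈ Finset.univ.image e, f j :=
    (Finset.sum_image (fun a _ b _ h => he h)).symm
  rw [h1]
  refine (Finset.sum_subset (Finset.subset_univ _) ?_).symm
  intro j _ hj
  refine h0 j fun a ha => hj ?_
  rw [Finset.mem_image]; exact ⟨a, Finset.mem_univ a, ha⟩

lemma sum_emb_le {d m : ℕ} (e : Fin d → Fin m) (he : Function.Injective e) (f : Fin m → ℝ)
    (hf : ∀ j, 0 ≤ f j) : ∑ a, f (e a) ≤ ∑ j, f j := by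
  have h1 : ∑ a, f (e a) = ∑ j ∈ Finset.univ.image e, f j :=
    (Finset.sum_image (fun a _ b _ h => he h)).symm
  rw [h1]
  exact Finset.sum_le_sum_of_subset_of_nonneg (Finset.subset_univ _) (fun j _ _ => hf j)

noncomputable def eC {m : ℕ} (P : Matrix (Fin m) (Fin m) ℝ) :
    EuclideanSpace ℝ (Fin m) →L[ℝ] EuclideanSpace ℝ (Fin m) :=
  Matrix.toEuclideanCLM (𝕜 := ℝ) P

lemma eC_mul {m : ℕ} (P Q : Matrix (Fin m) (Fin m) ℝ) : eC (P * Q) = eC P * eC Q :=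
  map_mul _ _ _
lemma eC_sub {m : ℕ} (P Q : Matrix (Fin m) (Fin m) ℝ) : eC (P - Q) = eC P - eC Q :=
  map_sub _ _ _
lemma eC_one {m : ℕ} : eC (1 : Matrix (Fin m) (Fin m) ℝ) = 1 := map_one _
lemma eC_zero {m : ℕ} : eC (0 : Matrix (Fin m) (Fin m) ℝ) = 0 := map_zero _

lemma norm_star_eC {m : ℕ} (P : Matrix (Fin m) (Fin m) ℝ) : ‖eC (star P)‖ = ‖eC P‖ := by
  unfold eC
  rw [map_star, ContinuousLinearMap.star_eq_adjoint]
  exact LinearIsometryEquiv.norm_map ContinuousLinearMap.adjoint _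

lemma eC_apply {m : ℕ} (P : Matrix (Fin m) (Fin m) ℝ) (x : EuclideanSpace ℝ (Fin m)) (i : Fin m) :
    (eC P x) i = ∑ j, P i j * x j := rfl

lemma euc_norm_eq {m : ℕ} (x : EuclideanSpace ℝ (Fin m)) : ‖x‖ = Real.sqrt (∑ i, (x i)^2) := by
  rw [EuclideanSpace.norm_eq]; simp [sq_abs]

lemma norm_sq_eq {m : ℕ} (u : EuclideanSpace ℝ (Fin m)) : ‖u‖^2 = ∑ i, (u i)^2 := by
  rw [euc_norm_eq, Real.sq_sqrt (Finset.sum_nonneg fun i _ => sq_nonneg _)]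

lemma diag_eC_apply {m : ℕ} (dd : Fin m → ℝ) (u : EuclideanSpace ℝ (Fin m)) (i : Fin m) :
    (eC (Matrix.diagonal dd) u) i = dd i * u i := by
  rw [eC_apply, Finset.sum_eq_single i]
  · rw [Matrix.diagonal_apply_eq]
  · intro j _ hj; rw [Matrix.diagonal_apply_ne' _ hj]; ring
  · intro h; exact absurd (Finset.mem_univ i) h

lemma le_of_sq_le_sq' {a b : ℝ} (_ : 0 ≤ a) (hb : 0 ≤ b) (h : a^2 ≤ b^2) : a ≤ b := by
  nlinarith

lemma pythagJ {m n : ℕ} (u : EuclideanSpace ℝ (Fin m)) :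
    ‖eC (Matrix.diagonal (fun i : Fin m => if n ≤ (i:ℕ) then (1:ℝ) else 0)) u‖^2
      + ‖eC (Matrix.diagonal (fun i : Fin m => if (i:ℕ) < n then (1:ℝ) else 0)) u‖^2
      = ‖u‖^2 := by
  rw [norm_sq_eq, norm_sq_eq, norm_sq_eq, ← Finset.sum_add_distrib]
  refine Finset.sum_congr rfl fun i _ => ?_
  rw [diag_eC_apply, diag_eC_apply]
  by_cases h : n ≤ (i : ℕ)
  · rw [if_pos h, if_neg (by omega)]; ring
  · rw [if_neg h, if_pos (by omega)]; ring

/-- Norm of a compression is at most the norm of the full matrix. -/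
lemma norm_compress_le {d m : ℕ} (e : Fin d → Fin m) (he : Function.Injective e)
    (P : Matrix (Fin m) (Fin m) ℝ) (B : Matrix (Fin d) (Fin d) ℝ)
    (hB : ∀ a b, B a b = P (e a) (e b)) :
    ‖eC B‖ ≤ ‖eC P‖ := by
  apply ContinuousLinearMap.opNorm_le_bound _ (norm_nonneg _)
  intro x
  classical
  set x' : EuclideanSpace ℝ (Fin m) := WithLp.toLp 2 (fun j => if h : ∃ a, e a = j then x h.choose else 0)
    with hx'
  have hx'e : ∀ a, x' (e a) = x a := by
    intro a
    have h : ∃ a', e a' = e a := ⟨a, rfl⟩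
    have : x' (e a) = x h.choose := by simp only [hx', PiLp.toLp_apply, dif_pos h]
    rw [this, he h.choose_spec]
  have hx'0 : ∀ j, (∀ a, e a ≠ j) → x' j = 0 := by
    intro j hj
    have : x' j = if h : ∃ a, e a = j then x h.choose else 0 := rfl
    rw [this, dif_neg]; rintro ⟨a, ha⟩; exact hj a ha
  have hnx : ‖x'‖ = ‖x‖ := by
    rw [euc_norm_eq, euc_norm_eq]
    congr 1
    rw [sum_emb_eq e he _ (fun j hj => by rw [hx'0 j hj]; ring)]
    exact Finset.sum_congr rfl fun a _ => by rw [hx'e]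
  have happ : ∀ a, (eC B x) a = (eC P x') (e a) := by
    intro a
    rw [eC_apply, eC_apply]
    rw [sum_emb_eq e he _ (fun j hj => by rw [hx'0 j hj]; ring)]
    exact Finset.sum_congr rfl fun b _ => by rw [hB, hx'e]
  have h1 : ‖eC B x‖ ≤ ‖eC P x'‖ := by
    rw [euc_norm_eq, euc_norm_eq]
    apply Real.sqrt_le_sqrt
    calc ∑ a, (eC B x a)^2
        = ∑ a, ((eC P x') (e a))^2 := Finset.sum_congr rfl fun a _ => by rw [happ]
      _ ≤ _ := sum_emb_le e he _ (fun j => sq_nonneg _)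
  calc ‖eC B x‖ ≤ ‖eC P x'‖ := h1
    _ ≤ ‖eC P‖ * ‖x'‖ := ContinuousLinearMap.le_opNorm _ _
    _ = ‖eC P‖ * ‖x‖ := by rw [hnx]

/-- Norm of a padded matrix is at most the norm of the block. -/
lemma norm_pad_le {d m : ℕ} (e : Fin d → Fin m) (he : Function.Injective e)
    (P : Matrix (Fin m) (Fin m) ℝ) (B : Matrix (Fin d) (Fin d) ℝ)
    (hB : ∀ a b, B a b = P (e a) (e b))
    (hP0 : ∀ i j, ((∀ a, e a ≠ i) ∨ (∀ b, e b ≠ j)) → P i j = 0) :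
    ‖eC P‖ ≤ ‖eC B‖ := by
  apply ContinuousLinearMap.opNorm_le_bound _ (norm_nonneg _)
  intro x
  classical
  set xc : EuclideanSpace ℝ (Fin d) := WithLp.toLp 2 (fun b => x (e b)) with hxc
  have hnx : ‖xc‖ ≤ ‖x‖ := by
    rw [euc_norm_eq, euc_norm_eq]
    apply Real.sqrt_le_sqrt
    exact sum_emb_le e he _ (fun j => sq_nonneg _)
  have happ : ∀ a, (eC P x) (e a) = (eC B xc) a := by
    intro a
    rw [eC_apply, eC_apply]
    rw [sum_emb_eq e he _ (fun j hj => by rw [hP0 (e a) j (Or.inr hj)]; ring)]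
    exact Finset.sum_congr rfl fun b _ => by rw [hB]
  have h0 : ∀ j, (∀ a, e a ≠ j) → (eC P x) j = 0 := by
    intro j hj
    rw [eC_apply]
    apply Finset.sum_eq_zero
    intro b _
    rw [hP0 j b (Or.inl hj)]; ring
  have h1 : ‖eC P x‖ = ‖eC B xc‖ := by
    rw [euc_norm_eq, euc_norm_eq]
    congr 1
    rw [sum_emb_eq e he _ (fun j hj => by rw [h0 j hj]; ring)]
    exact Finset.sum_congr rfl fun a _ => by rw [happ]
  calc ‖eC P x‖ = ‖eC B xc‖ := h1
    _ ≤ ‖eC B‖ * ‖xc‖ := ContinuousLinearMap.le_opNorm _ _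
    _ ≤ ‖eC B‖ * ‖x‖ := mul_le_mul_of_nonneg_left hnx (norm_nonneg _)

lemma not_in_castLE_range {n m : ℕ} (hnm : n ≤ m) (j : Fin m)
    (hj : ∀ a : Fin n, Fin.castLE hnm a ≠ j) : n ≤ (j:ℕ) := by
  by_contra hc
  exact hj ⟨(j:ℕ), by omega⟩ (Fin.ext rfl)

lemma diagJ'_mul {n m : ℕ} (P : Matrix (Fin m) (Fin m) ℝ)
    (h : ∀ i j : Fin m, n ≤ (i:ℕ) → P i j = 0) :
    Matrix.diagonal (fun i : Fin m => if (i:ℕ) < n then (1:ℝ) else 0) * P = P := by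
  ext i j
  rw [Matrix.diagonal_mul]
  by_cases hi : (i:ℕ) < n
  · rw [if_pos hi, one_mul]
  · rw [h i j (by omega), if_neg hi]; ring

lemma Jsum {n m : ℕ} :
    Matrix.diagonal (fun i : Fin m => if n ≤ (i:ℕ) then (1:ℝ) else 0)
      + Matrix.diagonal (fun i : Fin m => if (i:ℕ) < n then (1:ℝ) else 0) = 1 := by
  ext i j
  by_cases hij : i = j
  · subst hij
    simp only [Matrix.add_apply, Matrix.diagonal_apply_eq, Matrix.one_apply_eq]
    by_cases h : n ≤ (i:ℕ)
    · rw [if_pos h, if_neg (by omega)]; ring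
    · rw [if_neg h, if_pos (by omega)]; ring
  · simp only [Matrix.add_apply, Matrix.diagonal_apply_ne _ hij, Matrix.one_apply_ne hij]
    ring

/-- For matrices supported in the top-left `n × n` corner, a one-sided inverse relation
(on the corner) is two-sided. -/
lemma comm_pad {n m : ℕ} (hnm : n ≤ m) (X Y : Matrix (Fin m) (Fin m) ℝ)
    (hX : ∀ i j : Fin m, n ≤ (i:ℕ) ∨ n ≤ (j:ℕ) → X i j = 0)
    (hY : ∀ i j : Fin m, n ≤ (i:ℕ) ∨ n ≤ (j:ℕ) → Y i j = 0)
    (hXY : X * Y = Matrix.diagonal (fun i : Fin m => if (i:ℕ) < n then (1:ℝ) else 0)) :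
    Y * X = Matrix.diagonal (fun i : Fin m => if (i:ℕ) < n then (1:ℝ) else 0) := by
  classical
  set e : Fin n → Fin m := Fin.castLE hnm with he
  have hei : Function.Injective e := Fin.castLE_injective hnm
  set x : Matrix (Fin n) (Fin n) ℝ := Matrix.of (fun a b => X (e a) (e b)) with hx
  set y : Matrix (Fin n) (Fin n) ℝ := Matrix.of (fun a b => Y (e a) (e b)) with hy
  have hxy : x * y = 1 := by
    ext a b
    have h1 : ∑ l : Fin m, X (e a) l * Y l (e b) = ∑ l : Fin n, X (e a) (e l) * Y (e l) (e b) :=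
      sum_emb_eq e hei _
        (fun j hj => by rw [hY _ _ (Or.inl (not_in_castLE_range hnm j hj))]; ring)
    calc (x * y) a b = ∑ l : Fin n, X (e a) (e l) * Y (e l) (e b) := by
          rw [Matrix.mul_apply]; rfl
      _ = ∑ l : Fin m, X (e a) l * Y l (e b) := h1.symm
      _ = (X * Y) (e a) (e b) := (Matrix.mul_apply).symm
      _ = (1 : Matrix (Fin n) (Fin n) ℝ) a b := by
          rw [hXY]
          by_cases hab : a = b
          · subst hab
            rw [Matrix.diagonal_apply_eq, Matrix.one_apply_eq, if_pos]
            exact a.isLt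
          · rw [Matrix.diagonal_apply_ne _ (fun hc => hab (hei hc)), Matrix.one_apply_ne hab]
  have hyx : y * x = 1 := mul_eq_one_comm.mp hxy
  ext i j
  by_cases hi : n ≤ (i:ℕ)
  · rw [Matrix.mul_apply, Finset.sum_eq_zero (fun l _ => by rw [hY i l (Or.inl hi)]; ring)]
    by_cases hij : i = j
    · subst hij; rw [Matrix.diagonal_apply_eq, if_neg (by omega)]
    · rw [Matrix.diagonal_apply_ne _ hij]
  · by_cases hj : n ≤ (j:ℕ)
    · rw [Matrix.mul_apply, Finset.sum_eq_zero (fun l _ => by rw [hX l j (Or.inr hj)]; ring)]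
      have hij : i ≠ j := fun hc => by rw [hc] at hi; exact hi hj
      rw [Matrix.diagonal_apply_ne _ hij]
    · have hi' : e ⟨(i:ℕ), by omega⟩ = i := Fin.ext rfl
      have hj' : e ⟨(j:ℕ), by omega⟩ = j := Fin.ext rfl
      calc (Y * X) i j = ∑ l : Fin m, Y i l * X l j := Matrix.mul_apply
        _ = ∑ l : Fin n, Y i (e l) * X (e l) j :=
            sum_emb_eq e hei _
              (fun l hl => by rw [hX _ _ (Or.inl (not_in_castLE_range hnm l hl))]; ring)
        _ = (y * x) ⟨(i:ℕ), by omega⟩ ⟨(j:ℕ), by omega⟩ := by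
            rw [Matrix.mul_apply]
            refine Finset.sum_congr rfl fun l _ => ?_
            rw [hy, hx]
            simp only [Matrix.of_apply]
            rw [hi', hj']
        _ = (1 : Matrix (Fin n) (Fin n) ℝ) ⟨(i:ℕ), by omega⟩ ⟨(j:ℕ), by omega⟩ := by rw [hyx]
        _ = Matrix.diagonal (fun i : Fin m => if (i:ℕ) < n then (1:ℝ) else 0) i j := by
            by_cases hij : i = j
            · subst hij
              rw [Matrix.one_apply_eq, Matrix.diagonal_apply_eq, if_pos (by omega)]
            · have hne : (⟨(i:ℕ), by omega⟩ : Fin n) ≠ ⟨(j:ℕ), by omega⟩ :=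
                fun hc => hij (Fin.ext (Fin.mk_eq_mk.mp hc))
              rw [Matrix.one_apply_ne hne, Matrix.diagonal_apply_ne _ hij]

lemma key_bound {n m : ℕ} (hm : 0 < m)
    (Mm Ai Mi : Matrix (Fin m) (Fin m) ℝ) (CM Ci : ℝ)
    (hMm : ‖eC Mm‖ ≤ CM)
    (hAi : ‖eC Ai‖ ≤ Ci)
    (hMi : Mm * Mi = 1)
    (hMiN : ‖eC Mi‖ ≤ Ci)
    (hAirow : ∀ i j : Fin m, n ≤ (i : ℕ) → Ai i j = 0)
    (hAMJ' : Ai * Mm * Matrix.diagonal (fun i : Fin m => if (i:ℕ) < n then (1:ℝ) else 0)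
       = Matrix.diagonal (fun i : Fin m => if (i:ℕ) < n then (1:ℝ) else 0)) :
    ‖eC (Mm - Mm * Ai * Mm)‖ ≤ CM^2 * Ci := by
  set dJ : Fin m → ℝ := fun i => if n ≤ (i:ℕ) then 1 else 0 with hdJ
  set dJ' : Fin m → ℝ := fun i => if (i:ℕ) < n then 1 else 0 with hdJ'
  set J := Matrix.diagonal dJ with hJ
  set J' := Matrix.diagonal dJ' with hJ'
  have hCM0 : 0 ≤ CM := le_trans (norm_nonneg _) hMm
  have hCi0 : 0 ≤ Ci := le_trans (norm_nonneg _) hAi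
  have hJJ' : J + J' = 1 := by
    ext i j
    by_cases hij : i = j
    · subst hij
      simp only [hJ, hJ', hdJ, hdJ', Matrix.add_apply, Matrix.diagonal_apply_eq,
        Matrix.one_apply_eq]
      by_cases h : n ≤ (i:ℕ)
      · rw [if_pos h, if_neg (by omega)]; ring
      · rw [if_neg h, if_pos (by omega)]; ring
    · simp only [hJ, hJ', Matrix.add_apply, Matrix.diagonal_apply_ne _ hij,
        Matrix.one_apply_ne hij]
      ring
  -- 1 ≤ CM * Ci
  haveI : Nonempty (Fin m) := ⟨⟨0, hm⟩⟩
  have ht1 : (1:ℝ) ≤ CM * Ci := by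
    have h0 : (1:ℝ) = ‖(1 : EuclideanSpace ℝ (Fin m) →L[ℝ] EuclideanSpace ℝ (Fin m))‖ := by
      rw [ContinuousLinearMap.one_def, ContinuousLinearMap.norm_id]
    calc (1:ℝ) = ‖eC (Mm * Mi)‖ := by rw [hMi, eC_one, ← h0]
      _ ≤ ‖eC Mm‖ * ‖eC Mi‖ := by rw [eC_mul]; exact norm_mul_le _ _
      _ ≤ CM * Ci := mul_le_mul hMm hMiN (norm_nonneg _) hCM0
  have hc0 : (0:ℝ) ≤ CM^2 * Ci^2 - 1 := by nlinarith
  -- structural matrix facts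
  have hJ'Ai : J' * Ai = Ai := by
    ext i j
    rw [hJ', Matrix.diagonal_mul]
    by_cases h : (i:ℕ) < n
    · rw [hdJ']; simp only [if_pos h]; ring
    · rw [hAirow i j (by omega), hdJ']; simp only [if_neg h]; ring
  have hJAi : J * Ai = 0 := by
    ext i j
    rw [hJ, Matrix.diagonal_mul]
    by_cases h : n ≤ (i:ℕ)
    · rw [hAirow i j h]; simp
    · rw [hdJ]; simp only [if_neg h]; simp
  have hJJ : J * J = J := by
    rw [hJ, Matrix.diagonal_mul_diagonal]
    have h6 : (fun i => dJ i * dJ i) = dJ := by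
      funext i
      simp only [hdJ]
      split_ifs <;> ring
    rw [h6]
  -- T * J = T
  have hTJ' : (Mm - Mm * Ai * Mm) * J' = 0 := by
    have e1 : Mm * Ai * Mm * J' = Mm * (Ai * Mm * J') := by
      simp only [Matrix.mul_assoc]
    rw [Matrix.sub_mul, e1, hAMJ', sub_self]
  have hTJ : Mm - Mm * Ai * Mm = (Mm - Mm * Ai * Mm) * J := by
    conv_lhs => rw [← Matrix.mul_one (Mm - Mm * Ai * Mm), ← hJJ']
    rw [Matrix.mul_add, hTJ', add_zero]
  -- star facts
  have hstarJ' : star J' = J' := by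
    rw [hJ', Matrix.star_eq_conjTranspose, Matrix.diagonal_conjTranspose]
    congr 1
  have hstarAiJ' : star Ai * J' = star Ai := by
    rw [← hstarJ', ← StarMul.star_mul, hJ'Ai]
  -- norm bound for X = Ai * Mm * J
  have hXnorm : ‖eC (Ai * Mm * J)‖ ≤ Real.sqrt (CM^2 * Ci^2 - 1) := by
    rw [← norm_star_eC]
    apply ContinuousLinearMap.opNorm_le_bound _ (Real.sqrt_nonneg _)
    intro w
    set v := eC (star Ai) w with hv
    set u := eC (star Mm) v with hu
    have hstarJ : star J = J := by
      rw [hJ, Matrix.star_eq_conjTranspose, Matrix.diagonal_conjTranspose]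
      congr 1
    have hsX : star (Ai * Mm * J) = J * (star Mm * star Ai) := by
      rw [StarMul.star_mul, StarMul.star_mul, hstarJ]
    have hXsw : eC (star (Ai * Mm * J)) w = eC J u := by
      rw [hsX, eC_mul, eC_mul, ContinuousLinearMap.mul_apply, ContinuousLinearMap.mul_apply]
    have hJ'u : eC J' u = eC J' w := by
      have hmat : J' * (star Mm * star Ai) = J' := by
        have h5 := congrArg star hAMJ'
        rw [StarMul.star_mul, StarMul.star_mul, hstarJ'] at h5
        exact h5
      have : eC J' u = eC (J' * (star Mm * star Ai)) w := by
        rw [eC_mul, eC_mul, ContinuousLinearMap.mul_apply, ContinuousLinearMap.mul_apply, hu, hv]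
      rw [this, hmat]
    have hvle : ‖v‖ ≤ Ci * ‖eC J' w‖ := by
      have : v = eC (star Ai) (eC J' w) := by
        rw [hv, ← ContinuousLinearMap.mul_apply, ← eC_mul, hstarAiJ']
      rw [this]
      calc ‖eC (star Ai) (eC J' w)‖ ≤ ‖eC (star Ai)‖ * ‖eC J' w‖ :=
            ContinuousLinearMap.le_opNorm _ _
        _ ≤ Ci * ‖eC J' w‖ := by
            apply mul_le_mul_of_nonneg_right _ (norm_nonneg _)
            rw [norm_star_eC]; exact hAi
    have hule : ‖u‖ ≤ CM * ‖v‖ := by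
      calc ‖u‖ ≤ ‖eC (star Mm)‖ * ‖v‖ := ContinuousLinearMap.le_opNorm _ _
        _ ≤ CM * ‖v‖ := by
            apply mul_le_mul_of_nonneg_right _ (norm_nonneg _)
            rw [norm_star_eC]; exact hMm
    have hp : ‖eC J u‖^2 + ‖eC J' u‖^2 = ‖u‖^2 := pythagJ (n := n) u
    have hpw : ‖eC J w‖^2 + ‖eC J' w‖^2 = ‖w‖^2 := pythagJ (n := n) w
    have hJ'wle2 : ‖eC J' w‖^2 ≤ ‖w‖^2 := by nlinarith [sq_nonneg ‖eC J w‖]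
    have hsq : ‖eC (star (Ai * Mm * J)) w‖^2 ≤ (CM^2 * Ci^2 - 1) * ‖w‖^2 := by
      rw [hXsw]
      have h2 : ‖eC J u‖^2 = ‖u‖^2 - ‖eC J' w‖^2 := by rw [← hJ'u]; linarith
      have h3a : ‖u‖ ≤ CM * Ci * ‖eC J' w‖ := by
        calc ‖u‖ ≤ CM * ‖v‖ := hule
          _ ≤ CM * (Ci * ‖eC J' w‖) := mul_le_mul_of_nonneg_left hvle hCM0
          _ = CM * Ci * ‖eC J' w‖ := by ring
      have h3 : ‖u‖^2 ≤ CM^2 * Ci^2 * ‖eC J' w‖^2 := by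
        nlinarith [norm_nonneg u, mul_nonneg (mul_nonneg hCM0 hCi0) (norm_nonneg (eC J' w))]
      have h4 : (CM^2 * Ci^2 - 1) * ‖eC J' w‖^2 ≤ (CM^2 * Ci^2 - 1) * ‖w‖^2 :=
        mul_le_mul_of_nonneg_left hJ'wle2 hc0
      linarith
    apply le_of_sq_le_sq' (norm_nonneg _) (mul_nonneg (Real.sqrt_nonneg _) (norm_nonneg _))
    rw [mul_pow, Real.sq_sqrt hc0]
    exact hsq
  -- main estimate
  apply ContinuousLinearMap.opNorm_le_bound _ (by positivity)
  intro y
  set x := eC J y with hx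
  set z := eC (Ai * Mm * J) y with hz
  have happ : eC (Mm - Mm * Ai * Mm) y = eC Mm (x - z) := by
    conv_lhs => rw [hTJ]
    have e2 : (Mm - Mm * Ai * Mm) * J = Mm * J - Mm * (Ai * Mm * J) := by
      rw [Matrix.sub_mul]
      congr 1
      simp only [Matrix.mul_assoc]
    rw [e2, eC_sub, eC_mul, eC_mul, ContinuousLinearMap.sub_apply,
      ContinuousLinearMap.mul_apply, ContinuousLinearMap.mul_apply, ← hx, ← hz, map_sub]
  have hJx : eC J x = x := by
    rw [hx, ← ContinuousLinearMap.mul_apply, ← eC_mul, hJJ]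
  have hJz : eC J z = 0 := by
    rw [hz, ← ContinuousLinearMap.mul_apply, ← eC_mul, ← Matrix.mul_assoc, ← Matrix.mul_assoc,
      hJAi, Matrix.zero_mul, Matrix.zero_mul, eC_zero]
    rfl
  have hsplit : ‖x - z‖^2 = ‖x‖^2 + ‖z‖^2 := by
    have hp : ‖eC J (x - z)‖^2 + ‖eC J' (x - z)‖^2 = ‖x - z‖^2 := pythagJ (n := n) (x - z)
    have e1 : eC J (x - z) = x := by rw [map_sub, hJx, hJz, sub_zero]
    have e2 : eC J' (x - z) = -z := by
      have hJ'eq : J' = 1 - J := eq_sub_of_add_eq' hJJ'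
      rw [hJ'eq, eC_sub, eC_one, ContinuousLinearMap.sub_apply, ContinuousLinearMap.one_apply, e1]
      abel
    rw [e1, e2, norm_neg] at hp
    linarith
  have hxle : ‖x‖^2 ≤ ‖y‖^2 := by
    have hp : ‖eC J y‖^2 + ‖eC J' y‖^2 = ‖y‖^2 := pythagJ (n := n) y
    have : x = eC J y := hx
    nlinarith [sq_nonneg ‖eC J' y‖]
  have hzle : ‖z‖^2 ≤ (CM^2 * Ci^2 - 1) * ‖y‖^2 := by
    have h1 : ‖z‖ ≤ Real.sqrt (CM^2 * Ci^2 - 1) * ‖y‖ := by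
      calc ‖z‖ ≤ ‖eC (Ai * Mm * J)‖ * ‖y‖ := ContinuousLinearMap.le_opNorm _ _
        _ ≤ Real.sqrt (CM^2 * Ci^2 - 1) * ‖y‖ :=
            mul_le_mul_of_nonneg_right hXnorm (norm_nonneg _)
    have h2 := pow_le_pow_left₀ (norm_nonneg z) h1 2
    rwa [mul_pow, Real.sq_sqrt hc0] at h2
  have hfin : ‖x - z‖ ≤ CM * Ci * ‖y‖ := by
    apply le_of_sq_le_sq' (norm_nonneg _) (by positivity)
    rw [hsplit]
    have : (CM * Ci * ‖y‖)^2 = CM^2 * Ci^2 * ‖y‖^2 := by ring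
    rw [this]
    nlinarith
  calc ‖eC (Mm - Mm * Ai * Mm) y‖ = ‖eC Mm (x - z)‖ := by rw [happ]
    _ ≤ ‖eC Mm‖ * ‖x - z‖ := ContinuousLinearMap.le_opNorm _ _
    _ ≤ CM * (CM * Ci * ‖y‖) := by
        apply mul_le_mul hMm hfin (norm_nonneg _) hCM0
    _ = CM^2 * Ci * ‖y‖ := by ring

end Aux

/-- Bound on the diagonal blocks of the block-`LU` factor `U`: if `M` is bounded on `ℓ²`
(with norm bound `CM` on all finite sections), all leading block sections `M[k]` are
invertible with `‖M[k]⁻¹‖ ≤ C_infsup`, and `M = LU` is a block-LU factorization, then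
`‖U(k,k)‖ ≤ (1 + CM)² C_infsup` for every block `k`. -/
theorem statement5
    (N : ℕ → ℕ) (hN0 : N 0 = 0) (hNmono : StrictMono N)
    (M L U : ℕ → ℕ → ℝ)
    (CM : ℝ) (hCM : ∀ k : ℕ, ‖Matrix.toEuclideanCLM (𝕜 := ℝ) (matSec M (N k))‖ ≤ CM)
    (Cinfsup : ℝ)
    (Minv : ∀ k : ℕ, Matrix (Fin (N k)) (Fin (N k)) ℝ)
    (hMinv : ∀ k : ℕ, matSec M (N k) * Minv k = 1 ∧ Minv k * matSec M (N k) = 1)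
    (hMinvBound : ∀ k : ℕ, ‖Matrix.toEuclideanCLM (𝕜 := ℝ) (Minv k)‖ ≤ Cinfsup)
    (hL : BlockLowerUnit N L) (hU : BlockUpper N U)
    (hLU : ∀ i j : ℕ, M i j = ∑' k : ℕ, L i k * U k j) :
    ∀ k : ℕ,
      ‖Matrix.toEuclideanCLM (𝕜 := ℝ)
          ((fun a b => U (N k + (a : ℕ)) (N k + (b : ℕ)) :
            Matrix (Fin (N (k + 1) - N k)) (Fin (N (k + 1) - N k)) ℝ))‖
        ≤ (1 + CM) ^ 2 * Cinfsup := by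
  obtain ⟨hL1, hL2⟩ := hL
  intro k
  classical
  have hnm : N k ≤ N (k + 1) := (hNmono (Nat.lt_succ_self k)).le
  have hmpos : 0 < N (k + 1) := by
    have h := hNmono (Nat.succ_pos k)
    rw [hN0] at h
    exact h
  have hCM0 : 0 ≤ CM := le_trans (norm_nonneg _) (hCM 0)
  have hCi0 : 0 ≤ Cinfsup := le_trans (norm_nonneg _) (hMinvBound 0)
  set J : Matrix (Fin (N (k+1))) (Fin (N (k+1))) ℝ :=
    Matrix.diagonal (fun i => if N k ≤ (i:ℕ) then 1 else 0) with hJdef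
  set J' : Matrix (Fin (N (k+1))) (Fin (N (k+1))) ℝ :=
    Matrix.diagonal (fun i => if (i:ℕ) < N k then 1 else 0) with hJ'def
  set Apad : Matrix (Fin (N (k+1))) (Fin (N (k+1))) ℝ :=
    Matrix.of (fun i j =>
      if h : (i:ℕ) < N k ∧ (j:ℕ) < N k then Minv k ⟨i, h.1⟩ ⟨j, h.2⟩ else 0) with hApaddef
  have hApad_apply : ∀ i j : Fin (N (k+1)), Apad i j =
      if h : (i:ℕ) < N k ∧ (j:ℕ) < N k then Minv k ⟨i, h.1⟩ ⟨j, h.2⟩ else 0 := fun i j => rfl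
  have hAirow : ∀ i j : Fin (N (k+1)), N k ≤ (i:ℕ) → Apad i j = 0 := by
    intro i j h
    rw [hApad_apply, dif_neg (by omega)]
  have hAcol : ∀ i j : Fin (N (k+1)), N k ≤ (j:ℕ) → Apad i j = 0 := by
    intro i j h
    rw [hApad_apply, dif_neg (by omega)]
  set eN : Fin (N k) → Fin (N (k+1)) := Fin.castLE hnm with heN
  have heiN : Function.Injective eN := Fin.castLE_injective hnm
  -- LU factorization of the leading section
  have hsec : matSec M (N (k+1)) = matSec L (N (k+1)) * matSec U (N (k+1)) := by
    ext a b
    rw [Matrix.mul_apply]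
    show M (a:ℕ) (b:ℕ) = ∑ l : Fin (N (k+1)), L (a:ℕ) (l:ℕ) * U (l:ℕ) (b:ℕ)
    rw [hLU (a:ℕ) (b:ℕ),
      tsum_eq_sum (s := Finset.range (N (k+1)))
        (fun l hl => by
          rw [hL1 (a:ℕ) l ⟨k+1, a.isLt, by simpa using hl⟩]; ring),
      ← Fin.sum_univ_eq_sum_range (fun l => L (a:ℕ) l * U l (b:ℕ))]
  -- the section of L fixes J
  have hLJ : matSec L (N (k+1)) * J = J := by
    ext i j
    rw [hJdef, Matrix.mul_diagonal]
    by_cases hj : N k ≤ (j:ℕ)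
    · rw [if_pos hj, mul_one]
      by_cases hij : i = j
      · subst hij
        rw [Matrix.diagonal_apply_eq, if_pos hj]
        show L (i:ℕ) (i:ℕ) = 1
        rw [hL2 (i:ℕ) (i:ℕ) (fun _ => Iff.rfl), if_pos rfl]
      · rw [Matrix.diagonal_apply_ne _ hij]
        show L (i:ℕ) (j:ℕ) = 0
        by_cases hi : N k ≤ (i:ℕ)
        · have hsame : sameBlk N (i:ℕ) (j:ℕ) := by
            intro ℓ
            rcases le_or_gt ℓ k with h | h
            · have h2 := hNmono.monotone h
              constructor <;> intro <;> omega
            · have h2 := hNmono.monotone (by omega : k + 1 ≤ ℓ)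
              have h3 := i.isLt
              have h4 := j.isLt
              constructor <;> intro <;> omega
          rw [hL2 _ _ hsame, if_neg (fun hc => hij (Fin.ext hc))]
        · exact hL1 _ _ ⟨k, by omega, hj⟩
    · rw [if_neg hj, mul_zero]
      by_cases hij : i = j
      · subst hij; rw [Matrix.diagonal_apply_eq, if_neg hj]
      · rw [Matrix.diagonal_apply_ne _ hij]
  -- Apad is a left inverse of the section of M on the first block range
  have hAMJ' : Apad * matSec M (N (k+1)) * J' = J' := by
    ext i j
    rw [hJ'def, Matrix.mul_diagonal]
    by_cases hj : (j:ℕ) < N k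
    · rw [if_pos hj, mul_one]
      by_cases hi : (i:ℕ) < N k
      · calc (Apad * matSec M (N (k+1))) i j
            = ∑ l : Fin (N (k+1)), Apad i l * M (l:ℕ) (j:ℕ) := Matrix.mul_apply
          _ = ∑ c : Fin (N k), Apad i (eN c) * M ((eN c):ℕ) (j:ℕ) :=
              sum_emb_eq eN heiN _
                (fun l hl => by rw [hAcol i l (not_in_castLE_range hnm l hl)]; ring)
          _ = ∑ c : Fin (N k), Minv k ⟨(i:ℕ), hi⟩ c * matSec M (N k) c ⟨(j:ℕ), hj⟩ := by
              refine Finset.sum_congr rfl fun c _ => ?_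
              rw [hApad_apply, dif_pos ⟨hi, c.isLt⟩]
              exact rfl
          _ = (Minv k * matSec M (N k)) ⟨(i:ℕ), hi⟩ ⟨(j:ℕ), hj⟩ := (Matrix.mul_apply).symm
          _ = (1 : Matrix (Fin (N k)) (Fin (N k)) ℝ) ⟨(i:ℕ), hi⟩ ⟨(j:ℕ), hj⟩ := by
              rw [(hMinv k).2]
          _ = Matrix.diagonal (fun i : Fin (N (k+1)) => if (i:ℕ) < N k then (1:ℝ) else 0) i j := by
              by_cases hij : i = j
              · subst hij
                rw [Matrix.one_apply_eq, Matrix.diagonal_apply_eq, if_pos hi]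
              · have hne : (⟨(i:ℕ), hi⟩ : Fin (N k)) ≠ ⟨(j:ℕ), hj⟩ :=
                  fun hc => hij (Fin.ext (Fin.mk_eq_mk.mp hc))
                rw [Matrix.one_apply_ne hne, Matrix.diagonal_apply_ne _ hij]
      · rw [Matrix.mul_apply,
          Finset.sum_eq_zero (fun l _ => by rw [hAirow i l (by omega)]; ring)]
        have hij : i ≠ j := fun hc => by rw [hc] at hi; exact hi hj
        rw [Matrix.diagonal_apply_ne _ hij]
    · rw [if_neg hj, mul_zero]
      by_cases hij : i = j
      · subst hij; rw [Matrix.diagonal_apply_eq, if_neg hj]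
      · rw [Matrix.diagonal_apply_ne _ hij]
  -- supports
  have hYsupp : ∀ i j : Fin (N (k+1)), N k ≤ (i:ℕ) ∨ N k ≤ (j:ℕ) →
      (matSec U (N (k+1)) * J') i j = 0 := by
    intro i j h
    rw [hJ'def, Matrix.mul_diagonal]
    by_cases hj : (j:ℕ) < N k
    · rw [if_pos hj, mul_one]
      have hi : N k ≤ (i:ℕ) := by
        rcases h with h|h
        · exact h
        · omega
      exact hU _ _ ⟨k, hj, hi⟩
    · rw [if_neg hj]; ring
  have hXsupp : ∀ i j : Fin (N (k+1)), N k ≤ (i:ℕ) ∨ N k ≤ (j:ℕ) →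
      (Apad * matSec L (N (k+1))) i j = 0 := by
    intro i j h
    rw [Matrix.mul_apply]
    apply Finset.sum_eq_zero
    intro l _
    rcases h with h|h
    · rw [hAirow i l h]; ring
    · by_cases hl : (l:ℕ) < N k
      · rw [show matSec L (N (k+1)) l j = 0 from hL1 _ _ ⟨k, hl, h⟩]; ring
      · rw [hAcol i l (by omega)]; ring
  have hXY2 : (Apad * matSec L (N (k+1))) * (matSec U (N (k+1)) * J') = J' := by
    have h1 : (Apad * matSec L (N (k+1))) * (matSec U (N (k+1)) * J')
        = Apad * (matSec L (N (k+1)) * matSec U (N (k+1))) * J' := by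
      simp only [Matrix.mul_assoc]
    rw [h1, ← hsec]
    exact hAMJ'
  have hYX2 : (matSec U (N (k+1)) * J') * (Apad * matSec L (N (k+1))) = J' :=
    comm_pad hnm _ _ hXsupp hYsupp hXY2
  have hUmG : matSec U (N (k+1)) * (Apad * matSec L (N (k+1))) = J' := by
    have h1 : J' * (Apad * matSec L (N (k+1))) = Apad * matSec L (N (k+1)) := by
      rw [hJ'def]
      exact diagJ'_mul _ (fun i j h => hXsupp i j (Or.inl h))
    calc matSec U (N (k+1)) * (Apad * matSec L (N (k+1)))
        = matSec U (N (k+1)) * (J' * (Apad * matSec L (N (k+1)))) := by rw [h1]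
      _ = (matSec U (N (k+1)) * J') * (Apad * matSec L (N (k+1))) := by
          rw [Matrix.mul_assoc]
      _ = J' := hYX2
  have hJJ'sum : J + J' = 1 := by rw [hJdef, hJ'def]; exact Jsum
  -- the key identity
  have hkey : J * matSec U (N (k+1)) =
      matSec M (N (k+1)) - matSec M (N (k+1)) * Apad * matSec M (N (k+1)) := by
    have h1 : matSec M (N (k+1)) * Apad * matSec M (N (k+1))
        = matSec L (N (k+1)) * (J' * matSec U (N (k+1))) := by
      calc matSec M (N (k+1)) * Apad * matSec M (N (k+1))
          = matSec L (N (k+1)) *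
              ((matSec U (N (k+1)) * (Apad * matSec L (N (k+1)))) * matSec U (N (k+1))) := by
            rw [hsec]; simp only [Matrix.mul_assoc]
        _ = matSec L (N (k+1)) * (J' * matSec U (N (k+1))) := by rw [hUmG]
    have hJeq : J = 1 - J' := eq_sub_of_add_eq hJJ'sum
    calc J * matSec U (N (k+1))
        = matSec L (N (k+1)) * (J * matSec U (N (k+1))) := by
          rw [← Matrix.mul_assoc, hLJ]
      _ = matSec L (N (k+1)) * ((1 - J') * matSec U (N (k+1))) := by rw [hJeq]
      _ = matSec L (N (k+1)) * matSec U (N (k+1))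
            - matSec L (N (k+1)) * (J' * matSec U (N (k+1))) := by
          rw [Matrix.sub_mul, Matrix.one_mul, Matrix.mul_sub]
      _ = matSec M (N (k+1)) - matSec M (N (k+1)) * Apad * matSec M (N (k+1)) := by
          rw [← hsec, ← h1]
  -- norm of Apad
  have hApadN : ‖eC Apad‖ ≤ Cinfsup := by
    refine le_trans (norm_pad_le eN heiN Apad (Minv k) ?_ ?_) (hMinvBound k)
    · intro a b
      rw [hApad_apply, dif_pos ⟨a.isLt, b.isLt⟩]
      exact rfl
    · intro i j h
      rcases h with h|h
      · exact hAirow i j (not_in_castLE_range hnm i h)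
      · exact hAcol i j (not_in_castLE_range hnm j h)
  have hnorm1 : ‖eC (matSec M (N (k+1)) - matSec M (N (k+1)) * Apad * matSec M (N (k+1)))‖
      ≤ CM^2 * Cinfsup :=
    key_bound (n := N k) hmpos _ _ (Minv (k+1)) CM Cinfsup (hCM (k+1)) hApadN
      (hMinv (k+1)).1 (hMinvBound (k+1)) hAirow hAMJ'
  -- compression
  set emb : Fin (N (k+1) - N k) → Fin (N (k+1)) :=
    (fun a => ⟨N k + (a:ℕ), by have := a.isLt; omega⟩) with hembdef
  have hembi : Function.Injective emb := by
    intro a b hab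
    have h : N k + (a:ℕ) = N k + (b:ℕ) := congrArg Fin.val hab
    exact Fin.ext (by omega)
  have hcomp : ∀ a b : Fin (N (k+1) - N k),
      U (N k + (a:ℕ)) (N k + (b:ℕ)) = (J * matSec U (N (k+1))) (emb a) (emb b) := by
    intro a b
    rw [hJdef, Matrix.diagonal_mul,
      if_pos (show N k ≤ ((emb a : Fin (N (k+1))):ℕ) from Nat.le_add_right _ _), one_mul]
    rfl
  have hfin : ‖eC ((fun a b => U (N k + (a:ℕ)) (N k + (b:ℕ))) :
      Matrix (Fin (N (k + 1) - N k)) (Fin (N (k + 1) - N k)) ℝ)‖ ≤ (1 + CM)^2 * Cinfsup := by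
    calc ‖eC ((fun a b => U (N k + (a:ℕ)) (N k + (b:ℕ))) :
        Matrix (Fin (N (k + 1) - N k)) (Fin (N (k + 1) - N k)) ℝ)‖
        ≤ ‖eC (J * matSec U (N (k+1)))‖ := norm_compress_le emb hembi _ _ hcomp
      _ = ‖eC (matSec M (N (k+1)) - matSec M (N (k+1)) * Apad * matSec M (N (k+1)))‖ := by
          rw [hkey]
      _ ≤ CM^2 * Cinfsup := hnorm1
      _ ≤ (1 + CM)^2 * Cinfsup := by nlinarith
  exact hfin
end

section
/- Let M ∈ ℝ^{ℕ×ℕ} with block structure n_1 < n_2 < ⋯ such that each leading block section M[k] is invertible, and let M = LU be the (unique) block-LU factorization with L(i,i) = I. Then for all i ≤ k, the (i,k)-th block of M[k]⁻¹ equals the (i,k)-th block of U⁻¹, i.e., M[k]⁻¹(i,k) = U⁻¹(i,k). -/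
private lemma tsum_fin (f : ℕ → ℝ) (n : ℕ) (h : ∀ c, n ≤ c → f c = 0) :
    ∑' c : ℕ, f c = ∑ c : Fin n, f (c : ℕ) := by
  rw [tsum_eq_sum (s := Finset.range n) (fun c hc => h c (by simpa using hc)),
    Fin.sum_univ_eq_sum_range]

/-- The entries of `M[k]⁻¹` in the last block column agree with those of `U⁻¹`:
if `M = LU` is the normalized block-LU factorization, then `M[k]⁻¹(i,k) = U⁻¹(i,k)`
for all block indices `i ≤ k`. -/
theorem statement7
    (N : ℕ → ℕ) (hN0 : N 0 = 0) (hNmono : StrictMono N)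
    (M L U Uinv : ℕ → ℕ → ℝ)
    (hL : BlockLowerUnit N L) (hU : BlockUpper N U) (hUinv : BlockUpper N Uinv)
    (hLU : ∀ i j : ℕ, M i j = ∑' k : ℕ, L i k * U k j)
    (hUUinv : ∀ i j : ℕ, (∑' k : ℕ, U i k * Uinv k j) = if i = j then 1 else 0)
    (hUinvU : ∀ i j : ℕ, (∑' k : ℕ, Uinv i k * U k j) = if i = j then 1 else 0)
    (Minv : ∀ n : ℕ, Matrix (Fin (N n)) (Fin (N n)) ℝ)
    (hMinv : ∀ n : ℕ, matSec M (N n) * Minv n = 1 ∧ Minv n * matSec M (N n) = 1) :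
    ∀ (k : ℕ) (a b : Fin (N (k + 1))), N k ≤ (b : ℕ) →
      Minv (k + 1) a b = Uinv (a : ℕ) (b : ℕ) := by
  intro k a b hb
  -- section of M factors
  have hsec : matSec M (N (k + 1)) = matSec L (N (k + 1)) * matSec U (N (k + 1)) := by
    ext i j
    rw [Matrix.mul_apply]
    show M (i : ℕ) (j : ℕ) = ∑ c : Fin (N (k + 1)), L (i : ℕ) (c : ℕ) * U (c : ℕ) (j : ℕ)
    rw [hLU]
    exact tsum_fin (fun c => L (i : ℕ) c * U c (j : ℕ)) (N (k + 1))
      (fun c hc => show L (i : ℕ) c * U c (j : ℕ) = 0 by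
        rw [hL.1 (i : ℕ) c ⟨k + 1, i.isLt, hc⟩, zero_mul])
  -- section of U times section of Uinv is the identity
  have hUU : matSec U (N (k + 1)) * matSec Uinv (N (k + 1)) = 1 := by
    ext i j
    rw [Matrix.mul_apply, Matrix.one_apply]
    show (∑ c : Fin (N (k + 1)), U (i : ℕ) (c : ℕ) * Uinv (c : ℕ) (j : ℕ)) = _
    rw [← tsum_fin (fun c => U (i : ℕ) c * Uinv c (j : ℕ)) (N (k + 1))
      (fun c hc => show U (i : ℕ) c * Uinv c (j : ℕ) = 0 by
        rw [hUinv c (j : ℕ) ⟨k + 1, j.isLt, hc⟩, mul_zero]), hUUinv]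
    simp [Fin.ext_iff]
  -- Minv * Lsec = Uinvsec
  have key : Minv (k + 1) * matSec L (N (k + 1)) = matSec Uinv (N (k + 1)) := by
    have h2 := congrArg (· * matSec Uinv (N (k + 1))) (hMinv (k + 1)).2
    simp only [hsec] at h2
    rw [mul_assoc, mul_assoc, hUU, mul_one, one_mul] at h2
    exact h2
  -- the b-column of L (restricted) is the standard basis column
  have hLcol : ∀ c : Fin (N (k + 1)),
      matSec L (N (k + 1)) c b = if c = b then 1 else 0 := by
    intro c
    by_cases hc : (c : ℕ) < N k
    · have h0 : L (c : ℕ) (b : ℕ) = 0 := hL.1 _ _ ⟨k, hc, hb⟩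
      have hne : c ≠ b := by
        intro h; rw [h] at hc; exact absurd hb (not_le.mpr hc)
      simp [matSec, h0, hne]
    · push_neg at hc
      have hsame : sameBlk N (c : ℕ) (b : ℕ) := by
        intro ℓ
        rcases le_or_gt ℓ k with hℓ | hℓ
        · have h1 : N ℓ ≤ N k := hNmono.monotone hℓ
          constructor <;> intro h <;> omega
        · have h1 : N (k + 1) ≤ N ℓ := hNmono.monotone hℓ
          have hcn := c.isLt
          have hbn := b.isLt
          constructor <;> intro h <;> omega
      have := hL.2 (c : ℕ) (b : ℕ) hsame
      simpa [matSec, Fin.ext_iff] using this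
  have hfin := congrFun (congrFun key a) b
  rw [Matrix.mul_apply] at hfin
  simp only [hLcol, mul_ite, mul_one, mul_zero] at hfin
  rw [Finset.sum_ite_eq' Finset.univ b (fun c => Minv (k + 1) a c)] at hfin
  simpa [matSec] using hfin
end

section
/- Let (w_n)_{n∈ℕ} be a Riesz basis of a Hilbert space 𝒳 with C⁻¹‖x‖² ≤ ∑ λ_n² ≤ C‖x‖² for x = ∑ λ_n w_n. Let a : 𝒳 × 𝒳 → ℝ be a bounded bilinear form and M_{ij} := a(w_j, w_i). Suppose 𝒳_ℓ := span{w_1,…,w_{N_ℓ}} (with N_ℓ strictly increasing) and M has a block-LU factorization M = LU with respect to the block structure induced by (N_ℓ), with U and U⁻¹ bounded on ℓ². Let u ∈ 𝒳 solve a(u,v) = f(v) for all v ∈ 𝒳 and u_ℓ ∈ 𝒳_ℓ solve a(u_ℓ,v) = f(v) for all v ∈ 𝒳_ℓ (assumed to exist uniquely). Then there is a constant C_qo such that for all ℓ: ∑_{k=ℓ}^∞ ‖u_{k+1} − u_k‖² ≤ C_qo ‖u − u_ℓ‖². -/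
/-- `T` is the bounded operator on `ℓ²` represented by the matrix `A`. -/
def lpRepr (A : ℕ → ℕ → ℝ) (T : lp (fun _ : ℕ => ℝ) 2 →L[ℝ] lp (fun _ : ℕ => ℝ) 2) : Prop :=
  ∀ (x : lp (fun _ : ℕ => ℝ) 2) (i : ℕ), T x i = ∑' j : ℕ, A i j * x j

set_option maxHeartbeats 1000000

/-- General quasi-orthogonality from a bounded block-LU factorization of the stiffness matrix:
if `(w_n)` is a Riesz basis, `M_{ij} = a(w_j, w_i)` admits a block-LU factorization `M = LU`
with `U, U⁻¹` bounded on `ℓ²`, and `u`, `u_ℓ` are the exact and Galerkin solutions, then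
`∑_{k≥ℓ} ‖u_{k+1} − u_k‖² ≤ C_qo ‖u − u_ℓ‖²` for all `ℓ`. -/
theorem statement11
    {X : Type*} [NormedAddCommGroup X] [InnerProductSpace ℝ X] [CompleteSpace X]
    (w : ℕ → X) (C : ℝ) (hC : 0 < C)
    (hRiesz : ∀ (lam : ℕ → ℝ) (x : X), Summable (fun n => lam n ^ 2) →
      HasSum (fun n => lam n • w n) x →
        C⁻¹ * ‖x‖ ^ 2 ≤ (∑' n : ℕ, lam n ^ 2) ∧ (∑' n : ℕ, lam n ^ 2) ≤ C * ‖x‖ ^ 2)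
    (a : X →ₗ[ℝ] X →ₗ[ℝ] ℝ) (Ca : ℝ)
    (ha : ∀ x y : X, |a x y| ≤ Ca * ‖x‖ * ‖y‖)
    (M : ℕ → ℕ → ℝ) (hMdef : ∀ i j : ℕ, M i j = a (w j) (w i))
    (N : ℕ → ℕ) (hNmono : StrictMono N)
    (Xsp : ℕ → Submodule ℝ X)
    (hXsp : ∀ ℓ : ℕ, Xsp ℓ = Submodule.span ℝ (w '' {n : ℕ | n < N ℓ}))
    (Cinfsup : ℝ)
    (Minv : ∀ ℓ : ℕ, Matrix (Fin (N ℓ)) (Fin (N ℓ)) ℝ)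
    (hMinv : ∀ ℓ : ℕ, matSec M (N ℓ) * Minv ℓ = 1 ∧ Minv ℓ * matSec M (N ℓ) = 1)
    (hMinvBound : ∀ ℓ : ℕ, ‖Matrix.toEuclideanCLM (𝕜 := ℝ) (Minv ℓ)‖ ≤ Cinfsup)
    (L U Uinv : ℕ → ℕ → ℝ)
    (hL : BlockLowerUnit N L) (hU : BlockUpper N U) (hUinvUp : BlockUpper N Uinv)
    (hLU : ∀ i j : ℕ, M i j = ∑' k : ℕ, L i k * U k j)
    (hUUinv : ∀ i j : ℕ, (∑' k : ℕ, U i k * Uinv k j) = if i = j then 1 else 0)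
    (hUinvU : ∀ i j : ℕ, (∑' k : ℕ, Uinv i k * U k j) = if i = j then 1 else 0)
    (TU TUinv : lp (fun _ : ℕ => ℝ) 2 →L[ℝ] lp (fun _ : ℕ => ℝ) 2)
    (hTU : lpRepr U TU) (hTUinv : lpRepr Uinv TUinv)
    (f : X →L[ℝ] ℝ)
    (u : X) (hu : ∀ v : X, a u v = f v)
    (usol : ℕ → X)
    (husolmem : ∀ ℓ : ℕ, usol ℓ ∈ Xsp ℓ)
    (husol : ∀ ℓ : ℕ, ∀ v ∈ Xsp ℓ, a (usol ℓ) v = f v) :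
    ∃ Cqo : ℝ, 0 < Cqo ∧ ∀ ℓ : ℕ,
      (∑' k : ℕ, ‖usol (ℓ + k + 1) - usol (ℓ + k)‖ ^ 2) ≤ Cqo * ‖u - usol ℓ‖ ^ 2 := by
  classical
  -- basic facts
  have hNself : ∀ i : ℕ, i < N (i + 1) :=
    fun i => Nat.lt_of_lt_of_le (Nat.lt_succ_self i) hNmono.le_apply
  -- choose coefficients for the Galerkin solutions
  have hcoeff : ∀ m : ℕ, ∃ c : ℕ → ℝ, (∀ j, N m ≤ j → c j = 0) ∧
      (∑ j ∈ Finset.range (N m), c j • w j) = usol m := by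
    intro m
    have h := husolmem m
    rw [hXsp m, Finsupp.mem_span_image_iff_linearCombination] at h
    obtain ⟨l, hl, hlx⟩ := h
    rw [Finsupp.mem_supported] at hl
    refine ⟨fun j => l j, fun j hj => ?_, ?_⟩
    · by_contra h0
      exact absurd (hl (Finsupp.mem_support_iff.mpr h0)) (by simpa using hj)
    · rw [Finsupp.linearCombination_apply, Finsupp.sum] at hlx
      rw [← hlx]
      refine (Finset.sum_subset ?_ ?_).symm
      · intro j hj
        exact Finset.mem_range.mpr (hl hj)
      · intro j _ hj
        have h0 : l j = 0 := Finsupp.notMem_support_iff.mp hj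
        simp [h0]
  choose c hc0 hcsum using hcoeff
  -- sums representing `usol` over larger ranges
  have husum : ∀ ℓ m : ℕ, ℓ ≤ m → ∑ j ∈ Finset.range (N m), c ℓ j • w j = usol ℓ := by
    intro ℓ m hlm
    rw [← hcsum ℓ]
    refine (Finset.sum_subset (Finset.range_subset_range.mpr (hNmono.monotone hlm)) ?_).symm
    intro j _ hj
    rw [hc0 ℓ j (by simpa using hj), zero_smul]
  have hdiff : ∀ ℓ m : ℕ, ℓ ≤ m →
      usol m - usol ℓ = ∑ j ∈ Finset.range (N m), (c m j - c ℓ j) • w j := by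
    intro ℓ m hlm
    rw [← hcsum m, ← husum ℓ m hlm, ← Finset.sum_sub_distrib]
    exact Finset.sum_congr rfl fun j _ => (sub_smul _ _ _).symm
  -- Galerkin orthogonality
  have hwmem : ∀ m i : ℕ, i < N m → w i ∈ Xsp m := by
    intro m i hi
    rw [hXsp]
    exact Submodule.subset_span ⟨i, hi, rfl⟩
  have hGal : ∀ m i : ℕ, i < N m → (a (usol m)) (w i) = f (w i) :=
    fun m i hi => husol m (w i) (hwmem m i hi)
  -- bilinearity over finite sums
  have haSum : ∀ (n : ℕ) (g : ℕ → ℝ) (v : X),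
      (a (∑ j ∈ Finset.range n, g j • w j)) v = ∑ j ∈ Finset.range n, g j * (a (w j)) v := by
    intro n g v
    rw [map_sum]
    rw [LinearMap.sum_apply]
    exact Finset.sum_congr rfl fun j _ => by rw [map_smul, LinearMap.smul_apply, smul_eq_mul]
  -- Riesz basis inequalities for finitely supported coefficient vectors
  have hfinsummable : ∀ (n : ℕ) (lam : ℕ → ℝ), (∀ j, n ≤ j → lam j = 0) →
      Summable (fun j => lam j ^ 2) := by
    intro n lam h
    apply summable_of_ne_finset_zero (s := Finset.range n)
    intro j hj
    rw [h j (by simpa using hj)]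
    norm_num
  have hfinhs : ∀ (n : ℕ) (lam : ℕ → ℝ), (∀ j, n ≤ j → lam j = 0) →
      HasSum (fun j => lam j • w j) (∑ j ∈ Finset.range n, lam j • w j) := by
    intro n lam h
    apply hasSum_sum_of_ne_finset_zero
    intro j hj
    rw [h j (by simpa using hj), zero_smul]
  have hfintsum : ∀ (n : ℕ) (lam : ℕ → ℝ), (∀ j, n ≤ j → lam j = 0) →
      (∑' j : ℕ, lam j ^ 2) = ∑ j ∈ Finset.range n, lam j ^ 2 := by
    intro n lam h
    apply tsum_eq_sum
    intro j hj
    rw [h j (by simpa using hj)]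
    norm_num
  have hRieszUp : ∀ (n : ℕ) (lam : ℕ → ℝ), (∀ j, n ≤ j → lam j = 0) →
      ‖∑ j ∈ Finset.range n, lam j • w j‖ ^ 2 ≤ C * ∑ j ∈ Finset.range n, lam j ^ 2 := by
    intro n lam h
    have hlow := (hRiesz lam _ (hfinsummable n lam h) (hfinhs n lam h)).1
    rw [hfintsum n lam h] at hlow
    have h2 := mul_le_mul_of_nonneg_left hlow hC.le
    rwa [← mul_assoc, mul_inv_cancel₀ hC.ne', one_mul] at h2
  have hRieszLow : ∀ (n : ℕ) (lam : ℕ → ℝ), (∀ j, n ≤ j → lam j = 0) →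
      (∑ j ∈ Finset.range n, lam j ^ 2) ≤ C * ‖∑ j ∈ Finset.range n, lam j • w j‖ ^ 2 := by
    intro n lam h
    have hup := (hRiesz lam _ (hfinsummable n lam h) (hfinhs n lam h)).2
    rwa [hfintsum n lam h] at hup
  -- the ℓ²-norm of a finitely supported lp element
  have hnormsq : ∀ F : lp (fun _ : ℕ => ℝ) 2, ‖F‖ ^ 2 = ∑' i : ℕ, (F i : ℝ) ^ 2 := by
    intro F
    have h := lp.norm_rpow_eq_tsum (p := 2) (by norm_num) F
    rw [show ((2 : ENNReal).toReal) = ((2 : ℕ) : ℝ) by norm_num] at h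
    simp only [Real.rpow_natCast, Real.norm_eq_abs, sq_abs] at h
    exact_mod_cast h
  have hmemFin : ∀ (g : ℕ → ℝ) (n : ℕ), (∀ j, n ≤ j → g j = 0) → Memℓp g 2 := by
    intro g n hg
    apply memℓp_gen
    apply summable_of_ne_finset_zero (s := Finset.range n)
    intro j hj
    rw [hg j (by simpa using hj)]
    rw [norm_zero, show ((2 : ENNReal).toReal) = (2 : ℝ) by norm_num]
    exact Real.zero_rpow (by norm_num)
  -- the Euclidean norm squared
  have hEnormsq : ∀ (n : ℕ) (v : EuclideanSpace ℝ (Fin n)), ‖v‖ ^ 2 = ∑ i, (v i) ^ 2 := by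
    intro n v
    rw [EuclideanSpace.norm_eq, Real.sq_sqrt (by positivity)]
    exact Finset.sum_congr rfl fun i _ => by rw [Real.norm_eq_abs, sq_abs]
  have hCinfsup0 : 0 ≤ Cinfsup := (norm_nonneg _).trans (hMinvBound 0)
  -- the stiffness identity
  have hMdall : ∀ ℓ m : ℕ, ℓ ≤ m → ∀ i : ℕ,
      ∑ j ∈ Finset.range (N m), M i j * (c m j - c ℓ j) = (a (usol m - usol ℓ)) (w i) := by
    intro ℓ m hlm i
    rw [hdiff ℓ m hlm, haSum]
    exact Finset.sum_congr rfl fun j _ => by rw [hMdef i j]; ring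
  -- *** The stability estimate ***
  have hstab : ∀ ℓ m : ℕ, ℓ ≤ m →
      ∑ j ∈ Finset.range (N m), (c m j - c ℓ j) ^ 2 ≤
        Cinfsup ^ 2 * C * Ca ^ 2 * ‖u - usol ℓ‖ ^ 2 := by
    intro ℓ m hlm
    set e : X := u - usol ℓ with he
    set d : ℕ → ℝ := fun j => c m j - c ℓ j with hd
    set r : ℕ → ℝ := fun i => if i < N m then (a e) (w i) else 0 with hr
    have hr0 : ∀ j, N m ≤ j → r j = 0 := fun j hj => if_neg (not_lt.mpr hj)
    have hMdi : ∀ i : ℕ, i < N m →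
        ∑ j ∈ Finset.range (N m), M i j * d j = (a e) (w i) := by
      intro i hi
      rw [hMdall ℓ m hlm i]
      have h2 : (a (usol m - usol ℓ)) (w i) = f (w i) - (a (usol ℓ)) (w i) := by
        rw [map_sub, LinearMap.sub_apply, hGal m i hi]
      have h3 : (a e) (w i) = f (w i) - (a (usol ℓ)) (w i) := by
        rw [he, map_sub, LinearMap.sub_apply, hu (w i)]
      rw [h2, h3]
    -- matrix step
    have hrdef : ∀ i : ℕ, i < N m → r i = (a e) (w i) := fun i hi => if_pos hi
    have hmulVec : (matSec M (N m)).mulVec (fun i : Fin (N m) => d (i : ℕ)) =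
        (fun i : Fin (N m) => r (i : ℕ)) := by
      funext i
      have h1 : ((matSec M (N m)).mulVec (fun i : Fin (N m) => d (i : ℕ))) i
          = ∑ j : Fin (N m), M (i : ℕ) (j : ℕ) * d (j : ℕ) := by
        simp [Matrix.mulVec, dotProduct, matSec]
      rw [h1, Fin.sum_univ_eq_sum_range (fun j => M (i : ℕ) j * d j) (N m), hMdi i i.isLt]
      exact (hrdef (i : ℕ) i.isLt).symm
    have hdveq : (fun i : Fin (N m) => d (i : ℕ)) =
        (Minv m).mulVec (fun i : Fin (N m) => r (i : ℕ)) := by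
      rw [← hmulVec, Matrix.mulVec_mulVec, (hMinv m).2, Matrix.one_mulVec]
    set dv : EuclideanSpace ℝ (Fin (N m)) :=
      (WithLp.equiv 2 _).symm (fun i : Fin (N m) => d (i : ℕ)) with hdv
    set rv : EuclideanSpace ℝ (Fin (N m)) :=
      (WithLp.equiv 2 _).symm (fun i : Fin (N m) => r (i : ℕ)) with hrv
    have happ : Matrix.toEuclideanCLM (𝕜 := ℝ) (Minv m) rv = dv := by
      rw [hrv, WithLp.equiv_symm_apply, Matrix.toEuclideanCLM_toLp, hdv, WithLp.equiv_symm_apply, hdveq]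
    have hnormdr : ‖dv‖ ≤ Cinfsup * ‖rv‖ := by
      calc ‖dv‖ = ‖Matrix.toEuclideanCLM (𝕜 := ℝ) (Minv m) rv‖ := by rw [happ]
        _ ≤ ‖Matrix.toEuclideanCLM (𝕜 := ℝ) (Minv m)‖ * ‖rv‖ :=
            ContinuousLinearMap.le_opNorm _ _
        _ ≤ Cinfsup * ‖rv‖ := mul_le_mul_of_nonneg_right (hMinvBound m) (norm_nonneg _)
    have hdvsq : ‖dv‖ ^ 2 = ∑ j ∈ Finset.range (N m), d j ^ 2 := by
      rw [hEnormsq, ← Fin.sum_univ_eq_sum_range (fun j => d j ^ 2) (N m)]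
      rfl
    have hrvsq : ‖rv‖ ^ 2 = ∑ j ∈ Finset.range (N m), r j ^ 2 := by
      rw [hEnormsq, ← Fin.sum_univ_eq_sum_range (fun j => r j ^ 2) (N m)]
      rfl
    -- bound on the residual vector
    set S : ℝ := ∑ i ∈ Finset.range (N m), r i ^ 2 with hS
    have hSnonneg : 0 ≤ S := Finset.sum_nonneg fun i _ => sq_nonneg _
    set xS : X := ∑ i ∈ Finset.range (N m), r i • w i with hxS
    have haex : (a e) xS = S := by
      rw [hxS, map_sum]
      refine Finset.sum_congr rfl fun i hi => ?_
      rw [map_smul, smul_eq_mul, ← hrdef i (Finset.mem_range.mp hi)]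
      ring
    have hxSnorm : ‖xS‖ ^ 2 ≤ C * S := hRieszUp (N m) r hr0
    have habs : |(a e) xS| ≤ Ca * ‖e‖ * ‖xS‖ := ha e xS
    have hSsq : S ^ 2 ≤ Ca ^ 2 * ‖e‖ ^ 2 * (C * S) := by
      calc S ^ 2 = ((a e) xS) ^ 2 := by rw [haex]
        _ ≤ (Ca * ‖e‖ * ‖xS‖) ^ 2 := by
            rw [← sq_abs]
            exact pow_le_pow_left₀ (abs_nonneg _) habs 2
        _ = Ca ^ 2 * ‖e‖ ^ 2 * ‖xS‖ ^ 2 := by ring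
        _ ≤ Ca ^ 2 * ‖e‖ ^ 2 * (C * S) :=
            mul_le_mul_of_nonneg_left hxSnorm (by positivity)
    have hSle : S ≤ C * Ca ^ 2 * ‖e‖ ^ 2 := by
      rcases hSnonneg.eq_or_lt with h | h
      · rw [← h]; positivity
      · exact le_of_mul_le_mul_right (by nlinarith [hSsq]) h
    calc ∑ j ∈ Finset.range (N m), (c m j - c ℓ j) ^ 2 = ‖dv‖ ^ 2 := hdvsq.symm
      _ ≤ (Cinfsup * ‖rv‖) ^ 2 := pow_le_pow_left₀ (norm_nonneg _) hnormdr 2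
      _ = Cinfsup ^ 2 * ‖rv‖ ^ 2 := by ring
      _ = Cinfsup ^ 2 * S := by rw [hrvsq]
      _ ≤ Cinfsup ^ 2 * (C * Ca ^ 2 * ‖e‖ ^ 2) := mul_le_mul_of_nonneg_left hSle (sq_nonneg _)
      _ = Cinfsup ^ 2 * C * Ca ^ 2 * ‖u - usol ℓ‖ ^ 2 := by rw [he]; ring
  -- *** the transformed vectors z ***
  set z : ℕ → ℕ → ℝ := fun m k => ∑ j ∈ Finset.range (N m), U k j * c m j with hz
  have hzdef : ∀ m k : ℕ, z m k = ∑ j ∈ Finset.range (N m), U k j * c m j := fun m k => rfl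
  have hZa : ∀ m k : ℕ, N m ≤ k → z m k = 0 := by
    intro m k hk
    apply Finset.sum_eq_zero
    intro j hj
    rw [hU k j ⟨m, Finset.mem_range.mp hj, hk⟩, zero_mul]
  have hzext : ∀ ℓ m : ℕ, ℓ ≤ m → ∀ k : ℕ,
      z ℓ k = ∑ j ∈ Finset.range (N m), U k j * c ℓ j := by
    intro ℓ m hlm k
    refine Finset.sum_subset (Finset.range_subset_range.mpr (hNmono.monotone hlm)) ?_
    intro j _ hj
    rw [hc0 ℓ j (by simpa using hj), mul_zero]
  -- row-finiteness of L
  have hLrow : ∀ i j : ℕ, M i j = ∑ k ∈ Finset.range (N (i + 1)), L i k * U k j := by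
    intro i j
    rw [hLU i j]
    apply tsum_eq_sum
    intro k hk
    rw [hL.1 i k ⟨i + 1, hNself i, by simpa using hk⟩, zero_mul]
  -- *** agreement of z on earlier blocks ***
  have hZb : ∀ ℓ m : ℕ, ℓ ≤ m → ∀ k : ℕ, k < N ℓ → z m k = z ℓ k := by
    intro ℓ m hlm
    set d : ℕ → ℝ := fun j => c m j - c ℓ j with hd
    set s : ℕ → ℝ := fun k => ∑ j ∈ Finset.range (N m), U k j * d j with hs
    have hszz : ∀ k : ℕ, s k = z m k - z ℓ k := by
      intro k
      rw [hs, hzext ℓ m hlm k, hzdef m k]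
      rw [← Finset.sum_sub_distrib]
      exact Finset.sum_congr rfl fun j _ => by rw [hd]; ring
    have hMd0 : ∀ i : ℕ, i < N ℓ → ∑ j ∈ Finset.range (N m), M i j * d j = 0 := by
      intro i hi
      rw [hMdall ℓ m hlm i, map_sub, LinearMap.sub_apply,
        hGal m i (lt_of_lt_of_le hi (hNmono.monotone hlm)), hGal ℓ i hi, sub_self]
    have hLs : ∀ i : ℕ, ∑ k ∈ Finset.range (N (i + 1)), L i k * s k
        = ∑ j ∈ Finset.range (N m), M i j * d j := by
      intro i
      calc ∑ k ∈ Finset.range (N (i + 1)), L i k * s k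
          = ∑ k ∈ Finset.range (N (i + 1)), ∑ j ∈ Finset.range (N m),
              L i k * U k j * d j := by
            refine Finset.sum_congr rfl fun k _ => ?_
            rw [hs, Finset.mul_sum]
            exact Finset.sum_congr rfl fun j _ => by ring
        _ = ∑ j ∈ Finset.range (N m), ∑ k ∈ Finset.range (N (i + 1)),
              L i k * U k j * d j := Finset.sum_comm
        _ = ∑ j ∈ Finset.range (N m), M i j * d j := by
            refine Finset.sum_congr rfl fun j _ => ?_
            rw [hLrow i j, Finset.sum_mul]
    have hs0 : ∀ k : ℕ, k < N ℓ → s k = 0 := by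
      intro k
      induction k using Nat.strong_induction_on with
      | _ k ih =>
        intro hk
        have h0 : ∑ t ∈ Finset.range (N (k + 1)), L k t * s t = 0 := by
          rw [hLs k]
          exact hMd0 k hk
        have hone : L k k = 1 := by
          rw [hL.2 k k fun _ => Iff.rfl, if_pos rfl]
        have hsingle : ∑ t ∈ Finset.range (N (k + 1)), L k t * s t = L k k * s k := by
          apply Finset.sum_eq_single_of_mem k (Finset.mem_range.mpr (hNself k))
          intro t _ htk
          rcases htk.lt_or_gt with hlt | hgt
          · rw [ih t hlt (hlt.trans hk), mul_zero]
          · by_cases hsb : sameBlk N k t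
            · rw [hL.2 k t hsb, if_neg (Nat.ne_of_lt hgt), zero_mul]
            · obtain ⟨ℓ', hℓ'⟩ := not_forall.mp hsb
              have hkN : k < N ℓ' := by
                by_contra hkN
                exact hℓ' (iff_of_false hkN fun htN => hkN (hgt.trans htN))
              have htN : N ℓ' ≤ t := by
                by_contra htN
                exact hℓ' (iff_of_true hkN (not_le.mp htN))
              rw [hL.1 k t ⟨ℓ', hkN, htN⟩, zero_mul]
        rw [hsingle, hone, one_mul] at h0
        exact h0
    intro k hk
    have := hs0 k hk
    rw [hszz k] at this
    linarith [this]
  -- the limiting sequence y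
  set y : ℕ → ℝ := fun t => z (t + 1) t with hy
  have hyz : ∀ m t : ℕ, t < N m → z m t = y t := by
    intro m t ht
    rcases le_total m (t + 1) with h | h
    · exact (hZb m (t + 1) h t ht).symm
    · exact hZb (t + 1) m h t (hNself t)
  -- lp elements
  have hmemc : ∀ m : ℕ, Memℓp (c m) 2 := fun m => hmemFin (c m) (N m) (hc0 m)
  have hmemz : ∀ m : ℕ, Memℓp (z m) 2 := fun m => hmemFin (z m) (N m) (hZa m)
  set Cv : ℕ → lp (fun _ : ℕ => ℝ) 2 := fun m => ⟨c m, hmemc m⟩ with hCv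
  set Gv : ℕ → lp (fun _ : ℕ => ℝ) 2 := fun m => ⟨z m, hmemz m⟩ with hGv
  have hCvco : ∀ m i : ℕ, (Cv m : ∀ _ : ℕ, ℝ) i = c m i := fun m i => rfl
  have hGvco : ∀ m i : ℕ, (Gv m : ∀ _ : ℕ, ℝ) i = z m i := fun m i => rfl
  -- TU maps Cv to Gv
  have hTUC : ∀ m : ℕ, TU (Cv m) = Gv m := by
    intro m
    apply lp.ext
    funext k
    have h1 := hTU (Cv m) k
    have h2 : (∑' j : ℕ, U k j * (Cv m : ∀ _ : ℕ, ℝ) j) = z m k := by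
      rw [hz]
      apply tsum_eq_sum
      intro j hj
      rw [hCvco, hc0 m j (by simpa using hj), mul_zero]
    show (TU (Cv m) : ∀ _ : ℕ, ℝ) k = (Gv m : ∀ _ : ℕ, ℝ) k
    rw [h1, h2, hGvco]
  -- TUinv maps Gv to Cv
  have hTUinvG : ∀ m : ℕ, TUinv (Gv m) = Cv m := by
    intro m
    apply lp.ext
    funext i
    have h1 := hTUinv (Gv m) i
    have h2 : (∑' j : ℕ, Uinv i j * (Gv m : ∀ _ : ℕ, ℝ) j)
        = ∑ j ∈ Finset.range (N m), Uinv i j * z m j := by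
      apply tsum_eq_sum
      intro j hj
      rw [hGvco, hZa m j (by simpa using hj), mul_zero]
    have h3 : ∑ j ∈ Finset.range (N m), Uinv i j * z m j
        = ∑ j' ∈ Finset.range (N m), (∑ j ∈ Finset.range (N m), Uinv i j * U j j') * c m j' := by
      calc ∑ j ∈ Finset.range (N m), Uinv i j * z m j
          = ∑ j ∈ Finset.range (N m), ∑ j' ∈ Finset.range (N m),
              Uinv i j * U j j' * c m j' := by
            refine Finset.sum_congr rfl fun j _ => ?_
            rw [hzdef m j, Finset.mul_sum]
            exact Finset.sum_congr rfl fun j' _ => by ring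
        _ = ∑ j' ∈ Finset.range (N m), ∑ j ∈ Finset.range (N m),
              Uinv i j * U j j' * c m j' := Finset.sum_comm
        _ = ∑ j' ∈ Finset.range (N m),
              (∑ j ∈ Finset.range (N m), Uinv i j * U j j') * c m j' := by
            exact Finset.sum_congr rfl fun j' _ => by rw [Finset.sum_mul]
    have h4 : ∀ j' ∈ Finset.range (N m),
        (∑ j ∈ Finset.range (N m), Uinv i j * U j j') = if i = j' then 1 else 0 := by
      intro j' hj'
      rw [← hUinvU i j']
      refine (tsum_eq_sum ?_).symm
      intro j hj
      rw [hU j j' ⟨m, Finset.mem_range.mp hj', by simpa using hj⟩, mul_zero]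
    have h5 : ∑ j' ∈ Finset.range (N m), (∑ j ∈ Finset.range (N m), Uinv i j * U j j') * c m j'
        = ∑ j' ∈ Finset.range (N m), (if i = j' then 1 else 0) * c m j' :=
      Finset.sum_congr rfl fun j' hj' => by rw [h4 j' hj']
    have h6 : ∑ j' ∈ Finset.range (N m), (if i = j' then 1 else 0) * c m j' = c m i := by
      simp only [ite_mul, one_mul, zero_mul]
      rw [Finset.sum_ite_eq]
      by_cases hi : i < N m
      · simp [hi]
      · simp only [Finset.mem_range, hi, if_false]
        rw [hc0 m i (not_lt.mp hi)]
    show (TUinv (Gv m) : ∀ _ : ℕ, ℝ) i = (Cv m : ∀ _ : ℕ, ℝ) i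
    rw [h1, h2, h3, h5, h6, hCvco]
  -- norms of differences
  have hCnorm : ∀ ℓ m : ℕ, ℓ ≤ m →
      ‖Cv m - Cv ℓ‖ ^ 2 = ∑ j ∈ Finset.range (N m), (c m j - c ℓ j) ^ 2 := by
    intro ℓ m hlm
    rw [hnormsq]
    apply tsum_eq_sum
    intro j hj
    have hjm : N m ≤ j := by simpa using hj
    have : ((Cv m - Cv ℓ : lp (fun _ : ℕ => ℝ) 2) : ∀ _ : ℕ, ℝ) j = c m j - c ℓ j := by
      rw [lp.coeFn_sub, Pi.sub_apply, hCvco, hCvco]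
    rw [this, hc0 m j hjm, hc0 ℓ j (le_trans (hNmono.monotone hlm) hjm)]
    norm_num
  have hCsub : ∀ ℓ m : ℕ, ∀ j : ℕ,
      ((Cv m - Cv ℓ : lp (fun _ : ℕ => ℝ) 2) : ∀ _ : ℕ, ℝ) j = c m j - c ℓ j := by
    intro ℓ m j
    rw [lp.coeFn_sub, Pi.sub_apply, hCvco, hCvco]
  have hGsub : ∀ ℓ m : ℕ, ∀ j : ℕ,
      ((Gv m - Gv ℓ : lp (fun _ : ℕ => ℝ) 2) : ∀ _ : ℕ, ℝ) j = z m j - z ℓ j := by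
    intro ℓ m j
    rw [lp.coeFn_sub, Pi.sub_apply, hGvco, hGvco]
  have hGnorm : ∀ ℓ m : ℕ, ℓ ≤ m →
      ‖Gv m - Gv ℓ‖ ^ 2 = ∑ t ∈ Finset.Ico (N ℓ) (N m), y t ^ 2 := by
    intro ℓ m hlm
    rw [hnormsq]
    have h1 : (fun t : ℕ => (((Gv m - Gv ℓ : lp (fun _ : ℕ => ℝ) 2) : ∀ _ : ℕ, ℝ) t) ^ 2)
        = fun t : ℕ => (z m t - z ℓ t) ^ 2 := by
      funext t
      rw [hGsub]
    rw [h1]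
    rw [tsum_eq_sum (s := Finset.Ico (N ℓ) (N m)) ?_]
    · refine Finset.sum_congr rfl fun t ht => ?_
      obtain ⟨h1, h2⟩ := Finset.mem_Ico.mp ht
      rw [hZa ℓ t h1, hyz m t h2, sub_zero]
    · intro t ht
      rw [Finset.mem_Ico, not_and_or, not_le, not_lt] at ht
      rcases ht with h | h
      · rw [hZb ℓ m hlm t h, sub_self]
        norm_num
      · rw [hZa m t h, hZa ℓ t (le_trans (hNmono.monotone hlm) h), sub_self]
        norm_num
  -- operator norm bounds
  have hGC : ∀ ℓ m : ℕ, ‖Gv m - Gv ℓ‖ ^ 2 ≤ ‖TU‖ ^ 2 * ‖Cv m - Cv ℓ‖ ^ 2 := by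
    intro ℓ m
    have h1 : Gv m - Gv ℓ = TU (Cv m - Cv ℓ) := by
      rw [map_sub, hTUC, hTUC]
    rw [h1]
    have h2 : ‖TU (Cv m - Cv ℓ)‖ ≤ ‖TU‖ * ‖Cv m - Cv ℓ‖ := ContinuousLinearMap.le_opNorm _ _
    calc ‖TU (Cv m - Cv ℓ)‖ ^ 2 ≤ (‖TU‖ * ‖Cv m - Cv ℓ‖) ^ 2 :=
          pow_le_pow_left₀ (norm_nonneg _) h2 2
      _ = ‖TU‖ ^ 2 * ‖Cv m - Cv ℓ‖ ^ 2 := by ring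
  have hCG : ∀ ℓ m : ℕ, ‖Cv m - Cv ℓ‖ ^ 2 ≤ ‖TUinv‖ ^ 2 * ‖Gv m - Gv ℓ‖ ^ 2 := by
    intro ℓ m
    have h1 : Cv m - Cv ℓ = TUinv (Gv m - Gv ℓ) := by
      rw [map_sub, hTUinvG, hTUinvG]
    rw [h1]
    have h2 : ‖TUinv (Gv m - Gv ℓ)‖ ≤ ‖TUinv‖ * ‖Gv m - Gv ℓ‖ :=
      ContinuousLinearMap.le_opNorm _ _
    calc ‖TUinv (Gv m - Gv ℓ)‖ ^ 2 ≤ (‖TUinv‖ * ‖Gv m - Gv ℓ‖) ^ 2 :=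
          pow_le_pow_left₀ (norm_nonneg _) h2 2
      _ = ‖TUinv‖ ^ 2 * ‖Gv m - Gv ℓ‖ ^ 2 := by ring
  -- norm of usol increments via Riesz
  have husolinc : ∀ k : ℕ, ‖usol (k + 1) - usol k‖ ^ 2 ≤ C * ‖Cv (k + 1) - Cv k‖ ^ 2 := by
    intro k
    have hd0 : ∀ j, N (k + 1) ≤ j → c (k + 1) j - c k j = 0 := by
      intro j hj
      rw [hc0 (k + 1) j hj, hc0 k j (le_trans (hNmono.monotone (Nat.le_succ k)) hj), sub_self]
    have h1 := hRieszUp (N (k + 1)) (fun j => c (k + 1) j - c k j) hd0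
    rw [← hdiff k (k + 1) (Nat.le_succ k)] at h1
    rw [hCnorm k (k + 1) (Nat.le_succ k)]
    exact h1
  -- telescoping of the G increments
  have htel : ∀ ℓ p : ℕ,
      ∑ k ∈ Finset.range p, ‖Gv (ℓ + k + 1) - Gv (ℓ + k)‖ ^ 2
        = ∑ t ∈ Finset.Ico (N ℓ) (N (ℓ + p)), y t ^ 2 := by
    intro ℓ p
    induction p with
    | zero => simp
    | succ p ih =>
      rw [Finset.sum_range_succ, ih, hGnorm (ℓ + p) (ℓ + p + 1) (Nat.le_succ _)]
      have h1 : N ℓ ≤ N (ℓ + p) := hNmono.monotone (Nat.le_add_right ℓ p)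
      have h2 : N (ℓ + p) ≤ N (ℓ + p + 1) := hNmono.monotone (Nat.le_succ _)
      rw [show ℓ + p + 1 = ℓ + (p + 1) by ring] at h2 ⊢
      exact Finset.sum_Ico_consecutive _ h1 h2
  -- the final bound on partial sums
  set B : ℝ := C ^ 2 * ‖TU‖ ^ 2 * ‖TUinv‖ ^ 2 * Cinfsup ^ 2 * Ca ^ 2 with hB
  have hpartial : ∀ ℓ p : ℕ,
      ∑ k ∈ Finset.range p, ‖usol (ℓ + k + 1) - usol (ℓ + k)‖ ^ 2 ≤ B * ‖u - usol ℓ‖ ^ 2 := by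
    intro ℓ p
    have step1 : ∀ k : ℕ, ‖usol (ℓ + k + 1) - usol (ℓ + k)‖ ^ 2
        ≤ C * ‖TUinv‖ ^ 2 * ‖Gv (ℓ + k + 1) - Gv (ℓ + k)‖ ^ 2 := by
      intro k
      calc ‖usol (ℓ + k + 1) - usol (ℓ + k)‖ ^ 2
          ≤ C * ‖Cv (ℓ + k + 1) - Cv (ℓ + k)‖ ^ 2 := husolinc (ℓ + k)
        _ ≤ C * (‖TUinv‖ ^ 2 * ‖Gv (ℓ + k + 1) - Gv (ℓ + k)‖ ^ 2) :=
            mul_le_mul_of_nonneg_left (hCG (ℓ + k) (ℓ + k + 1)) hC.le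
        _ = C * ‖TUinv‖ ^ 2 * ‖Gv (ℓ + k + 1) - Gv (ℓ + k)‖ ^ 2 := by ring
    calc ∑ k ∈ Finset.range p, ‖usol (ℓ + k + 1) - usol (ℓ + k)‖ ^ 2
        ≤ ∑ k ∈ Finset.range p, C * ‖TUinv‖ ^ 2 * ‖Gv (ℓ + k + 1) - Gv (ℓ + k)‖ ^ 2 :=
          Finset.sum_le_sum fun k _ => step1 k
      _ = C * ‖TUinv‖ ^ 2 * ∑ k ∈ Finset.range p, ‖Gv (ℓ + k + 1) - Gv (ℓ + k)‖ ^ 2 := by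
          rw [Finset.mul_sum]
      _ = C * ‖TUinv‖ ^ 2 * ∑ t ∈ Finset.Ico (N ℓ) (N (ℓ + p)), y t ^ 2 := by rw [htel]
      _ = C * ‖TUinv‖ ^ 2 * ‖Gv (ℓ + p) - Gv ℓ‖ ^ 2 := by
          rw [hGnorm ℓ (ℓ + p) (Nat.le_add_right ℓ p)]
      _ ≤ C * ‖TUinv‖ ^ 2 * (‖TU‖ ^ 2 * ‖Cv (ℓ + p) - Cv ℓ‖ ^ 2) :=
          mul_le_mul_of_nonneg_left (hGC ℓ (ℓ + p))
            (mul_nonneg hC.le (sq_nonneg _))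
      _ = C * ‖TUinv‖ ^ 2 * ‖TU‖ ^ 2 * (∑ j ∈ Finset.range (N (ℓ + p)), (c (ℓ + p) j - c ℓ j) ^ 2) := by
          rw [hCnorm ℓ (ℓ + p) (Nat.le_add_right ℓ p)]; ring
      _ ≤ C * ‖TUinv‖ ^ 2 * ‖TU‖ ^ 2 * (Cinfsup ^ 2 * C * Ca ^ 2 * ‖u - usol ℓ‖ ^ 2) :=
          mul_le_mul_of_nonneg_left (hstab ℓ (ℓ + p) (Nat.le_add_right ℓ p))
            (mul_nonneg (mul_nonneg hC.le (sq_nonneg _)) (sq_nonneg _))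
      _ = B * ‖u - usol ℓ‖ ^ 2 := by rw [hB]; ring
  have hBnonneg : 0 ≤ B := by
    rw [hB]
    positivity
  refine ⟨B + 1, by linarith, ?_⟩
  intro ℓ
  have hnn : ∀ k : ℕ, 0 ≤ ‖usol (ℓ + k + 1) - usol (ℓ + k)‖ ^ 2 := fun k => sq_nonneg _
  refine Real.tsum_le_of_sum_range_le hnn fun p => ?_
  calc ∑ k ∈ Finset.range p, ‖usol (ℓ + k + 1) - usol (ℓ + k)‖ ^ 2
      ≤ B * ‖u - usol ℓ‖ ^ 2 := hpartial ℓ p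
    _ ≤ (B + 1) * ‖u - usol ℓ‖ ^ 2 := by nlinarith [sq_nonneg ‖u - usol ℓ‖]
end
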